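/- Fix ε > 0 small, a unit vector e ∈ ℝ², real numbers p, q, and a C¹ function P̄ : B_{1/2} → ℝ with ∂_e P̄ = 0 (derivative along e vanishes identically). Define P(x) = p(x·e)⁺ − q(x·e)⁻ + P̄(x) and the maps T⁺(x) = x − εP₊(x)e on B⁺ = B_{1/2} ∩ {x·e > 0} with P₊ = p(x·e) + P̄, and T⁻(x) = x − εP₋(x)e on B⁻ = B_{1/2} ∩ {x·e < 0} with P₋ = −q(x·e) + P̄. If ε(|p| + |q|) < 1, then T⁺(B⁺) ∩ T⁻(B⁻) = ∅. -/

import Mathlib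

open Metric

/-- The images of the upper and lower half-balls under the transformations
`T⁺(x) = x - εP₊(x)e` and `T⁻(x) = x - εP₋(x)e` are disjoint when `ε(|p| + |q|) < 1`. -/
theorem images_disjoint
    (p q ε : ℝ) (hε : 0 < ε) (hsmall : ε * (|p| + |q|) < 1)
    (e : EuclideanSpace ℝ (Fin 2)) (he : ‖e‖ = 1)
    (Pb : EuclideanSpace ℝ (Fin 2) → ℝ) (hPb : ContDiff ℝ 1 Pb)
    (hPe : ∀ x, fderiv ℝ Pb x e = 0) :
    ((fun x => x - (ε * (p * (inner ℝ x e : ℝ) + Pb x)) • e) ''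
        (ball (0 : EuclideanSpace ℝ (Fin 2)) (1/2) ∩ {x | 0 < (inner ℝ x e : ℝ)})) ∩
    ((fun x => x - (ε * (-q * (inner ℝ x e : ℝ) + Pb x)) • e) ''
        (ball (0 : EuclideanSpace ℝ (Fin 2)) (1/2) ∩ {x | (inner ℝ x e : ℝ) < 0})) = ∅ := by
  have hdiff : Differentiable ℝ Pb := hPb.differentiable one_ne_zero
  -- Pb is constant along direction e
  have hconst : ∀ (y : EuclideanSpace ℝ (Fin 2)) (c : ℝ), Pb (y + c • e) = Pb y := by
    intro y c
    have hg : ∀ t : ℝ, HasDerivAt (fun t : ℝ => Pb (y + t • e)) 0 t := by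
      intro t
      have h1 : HasDerivAt (fun t : ℝ => y + t • e) e t := by
        simpa using ((hasDerivAt_id t).smul_const e).const_add y
      have h2 := (hdiff (y + t • e)).hasFDerivAt.comp_hasDerivAt t h1
      rw [hPe] at h2; exact h2
    have := is_const_of_deriv_eq_zero (f := fun t : ℝ => Pb (y + t • e))
      (fun t => (hg t).differentiableAt) (fun t => (hg t).deriv) c 0
    simpa using this
  ext z
  simp only [Set.mem_inter_iff, Set.mem_image, Set.mem_empty_iff_false, iff_false]
  rintro ⟨⟨x, ⟨hx1, hx2⟩, hxz⟩, ⟨y, ⟨hy1, hy2⟩, hyz⟩⟩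
  set a : ℝ := inner ℝ x e with ha
  set b : ℝ := inner ℝ y e with hb
  have hxy : x - y = (ε * (p * a + Pb x) - ε * (-q * b + Pb y)) • e := by
    have := hxz.trans hyz.symm
    have : x - (ε * (p * a + Pb x)) • e = y - (ε * (-q * b + Pb y)) • e := this
    rw [sub_smul]
    abel_nf
    abel_nf at this
    linear_combination (norm := module) this
  set c : ℝ := ε * (p * a + Pb x) - ε * (-q * b + Pb y) with hc
  have hPxy : Pb x = Pb y := by
    have : x = y + c • e := by rw [← hxy]; abel
    rw [this, hconst]
  have hee : (inner ℝ e e : ℝ) = 1 := by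
    rw [real_inner_self_eq_norm_sq, he]; norm_num
  have hab : a - b = c := by
    have h := congrArg (fun v => (inner ℝ v e : ℝ)) hxy
    simp only [inner_sub_left, real_inner_smul_left] at h
    rw [hee, mul_one] at h
    exact h
  have h1 : a * (1 - ε * p) = b * (1 + ε * q) := by
    rw [hc, hPxy] at hab; ring_nf at hab ⊢; linarith
  have hp1 : 0 < 1 - ε * p := by
    have : ε * p ≤ ε * |p| := by nlinarith [le_abs_self p]
    nlinarith [abs_nonneg p, abs_nonneg q]
  have hq1 : 0 < 1 + ε * q := by
    have : -(ε * q) ≤ ε * |q| := by nlinarith [neg_abs_le q]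
    nlinarith [abs_nonneg p, abs_nonneg q]
  have hx2' : 0 < a := hx2
  have hy2' : b < 0 := hy2
  nlinarith
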